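/- Let E be an elliptic abelian Anderson A-module of dimension d and rank r over R = l[[z]]. Then H*_dR(E) := D(φ_E)/D_si(φ_E) has R-rank r, and D(φ_E)/D_i(φ_E) has R-rank r − d. -/

import Mathlib

open LinearMap Submodule Pointwise

section ResMap

variable (R S : Type*) [CommRing R] [CommRing S] [Algebra R S]
variable {X Y : Type*} [AddCommGroup X] [Module S X] [AddCommGroup Y] [Module S Y]

/-- Restriction of scalars of an `S`-linear map, as an `R`-linear map between
the `RestrictScalars` type synonyms. -/
def resMap (φ : X →ₗ[S] Y) :
    RestrictScalars R S X →ₗ[R] RestrictScalars R S Y where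
  toFun x := (RestrictScalars.addEquiv R S Y).symm (φ (RestrictScalars.addEquiv R S X x))
  map_add' x y := by simp
  map_smul' c x := by
    simp only [RingHom.id_apply, RestrictScalars.addEquiv_map_smul, map_smul,
      RestrictScalars.addEquiv_symm_map_algebraMap_smul]

@[simp] lemma resMap_apply (φ : X →ₗ[S] Y) (x : RestrictScalars R S X) :
    resMap R S φ x
      = (RestrictScalars.addEquiv R S Y).symm (φ (RestrictScalars.addEquiv R S X x)) := rfl

lemma resMap_injective {φ : X →ₗ[S] Y} (h : Function.Injective φ) :
    Function.Injective (resMap R S φ) := by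
  intro a b hab
  simp only [resMap_apply] at hab
  exact (RestrictScalars.addEquiv R S X).injective
    (h ((RestrictScalars.addEquiv R S Y).symm.injective hab))

lemma resMap_surjective {φ : X →ₗ[S] Y} (h : Function.Surjective φ) :
    Function.Surjective (resMap R S φ) := by
  intro y
  obtain ⟨x, hx⟩ := h (RestrictScalars.addEquiv R S Y y)
  exact ⟨(RestrictScalars.addEquiv R S X).symm x, by simp [hx]⟩

lemma resMap_range_ker {φ : X →ₗ[S] Y} {Z : Type*} [AddCommGroup Z] [Module S Z]
    {ψ : Y →ₗ[S] Z} (h : range φ = ker ψ) :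
    range (resMap R S φ) = ker (resMap R S ψ) := by
  ext x
  simp only [mem_range, mem_ker, resMap_apply]
  constructor
  · rintro ⟨a, rfl⟩
    have : φ (RestrictScalars.addEquiv R S X a) ∈ ker ψ := h ▸ mem_range_self _ _
    simp [mem_ker.mp this]
  · intro hx
    have h0 : ψ (RestrictScalars.addEquiv R S Y x) = 0 :=
      (RestrictScalars.addEquiv R S Z).symm.injective (by simpa using hx)
    have : RestrictScalars.addEquiv R S Y x ∈ range φ := h ▸ mem_ker.mpr h0
    obtain ⟨a, ha⟩ := this
    exact ⟨(RestrictScalars.addEquiv R S X).symm a, by simp [ha]⟩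

end ResMap

section Split

variable {R A B C : Type*} [CommRing R]
  [AddCommMonoid A] [Module R A] [AddCommMonoid B] [Module R B] [AddCommMonoid C] [Module R C]

/-- A short exact sequence of modules with free (hence projective) quotient splits. -/
theorem split_nonempty [Module.Free R C]
    (i : A →ₗ[R] B) (g : B →ₗ[R] C) (hi : Function.Injective i)
    (hg : Function.Surjective g) (hex : range i = ker g) :
    Nonempty (B ≃ₗ[R] A × C) := by
  letI := Module.addCommMonoidToAddCommGroup R (M := B)
  letI := Module.addCommMonoidToAddCommGroup R (M := C)
  obtain ⟨s, hs⟩ := g.exists_rightInverse_of_surjective (range_eq_top.2 hg)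
  have hgs : ∀ c, g (s c) = c := fun c => congrArg (fun f => f c) (congrArg DFunLike.coe hs)
  have hmem : ∀ b : B, b - s (g b) ∈ ker g := fun b => by simp [hgs]
  let F : B →ₗ[R] (ker g) × C :=
    LinearMap.prod (codRestrict (ker g) (LinearMap.id - s ∘ₗ g) hmem) g
  let G : (ker g) × C →ₗ[R] B := LinearMap.coprod (ker g).subtype s
  have hFG : F ∘ₗ G = LinearMap.id := by
    apply LinearMap.ext
    rintro ⟨k, c⟩
    have hk : g (k : B) = 0 := mem_ker.mp k.2
    apply Prod.ext
    · apply Subtype.ext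
      simp [F, G, hgs, hk]
    · simp [F, G, hgs, hk]
  have hGF : G ∘ₗ F = LinearMap.id := by
    apply LinearMap.ext
    intro b
    simp [F, G]
  let e0 : B ≃ₗ[R] (ker g) × C := LinearEquiv.ofLinear F G hFG hGF
  let e1 : A ≃ₗ[R] ker g :=
    (LinearEquiv.ofInjective i hi) ≪≫ₗ LinearEquiv.ofEq _ _ hex
  exact ⟨e0 ≪≫ₗ LinearEquiv.prodCongr e1.symm (LinearEquiv.refl R C)⟩

end Split



/-- Let `E` be an elliptic abelian Anderson `A`-module of
dimension `d` and rank `r` over `R = l[[z]]`.  Identifying the `A`-motive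
`M = M(E)` with a free `A ⊗ R ≅ R[t]`-module of rank `r`, the biderivation
modules are `D(φ_E) = Mτ =: N`, `D_i(φ_E) = (π − t)M` and
`D_si(φ_E) = (π − t)Mτ = (π − t)N`, and `M/N ≅ Lie(E)* ` is free of rank `d`
over `R`.  Then `H*_dR(E) = D(φ_E)/D_si(φ_E) = N/(π − t)N` has `R`-rank `r`,
and `D(φ_E)/D_i(φ_E) = N/(π − t)M` has `R`-rank `r − d`. -/
theorem deRham_rank
    {R : Type*} [CommRing R] [IsDomain R] [IsDiscreteValuationRing R]
    (π : R) (hπ : Irreducible π)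
    (r d : ℕ) (hdr : d ≤ r)
    (M : Type*) [AddCommGroup M] [Module (Polynomial R) M]
    [Module.Free (Polynomial R) M] [Module.Finite (Polynomial R) M]
    (hrkM : Module.finrank (Polynomial R) M = r)
    (N : Submodule (Polynomial R) M)
    -- `(π − t)·M ⊆ N`  (inner biderivations are biderivations)
    (hcN : ∀ m : M, (Polynomial.C π - Polynomial.X) • m ∈ N)
    -- `M/N ≅ Lie(E)*` is free of rank `d` over `R`
    [Module.Finite R (RestrictScalars R (Polynomial R) (M ⧸ N))]
    [Module.Free R (RestrictScalars R (Polynomial R) (M ⧸ N))]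
    (hLie : Module.finrank R (RestrictScalars R (Polynomial R) (M ⧸ N)) = d) :
    -- `N/(π−t)N` is free of rank `r` over `R`, and
    -- `N/(π−t)M` is free of rank `r − d` over `R`.
    (Module.Finite R (RestrictScalars R (Polynomial R)
        (N ⧸ (Submodule.comap N.subtype
          ((Ideal.span {Polynomial.C π - Polynomial.X} : Ideal (Polynomial R)) • N)))) ∧
     Module.Free R (RestrictScalars R (Polynomial R)
        (N ⧸ (Submodule.comap N.subtype
          ((Ideal.span {Polynomial.C π - Polynomial.X} : Ideal (Polynomial R)) • N)))) ∧
     Module.finrank R (RestrictScalars R (Polynomial R)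
        (N ⧸ (Submodule.comap N.subtype
          ((Ideal.span {Polynomial.C π - Polynomial.X} : Ideal (Polynomial R)) • N)))) = r) ∧
    (Module.Finite R (RestrictScalars R (Polynomial R)
        (N ⧸ (Submodule.comap N.subtype
          ((Ideal.span {Polynomial.C π - Polynomial.X} : Ideal (Polynomial R)) •
            (⊤ : Submodule (Polynomial R) M))))) ∧
     Module.Free R (RestrictScalars R (Polynomial R)
        (N ⧸ (Submodule.comap N.subtype
          ((Ideal.span {Polynomial.C π - Polynomial.X} : Ideal (Polynomial R)) •
            (⊤ : Submodule (Polynomial R) M))))) ∧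
     Module.finrank R (RestrictScalars R (Polynomial R)
        (N ⧸ (Submodule.comap N.subtype
          ((Ideal.span {Polynomial.C π - Polynomial.X} : Ideal (Polynomial R)) •
            (⊤ : Submodule (Polynomial R) M))))) = r - d) := by
  classical
  set f : Polynomial R := Polynomial.C π - Polynomial.X with hfdef
  set I : Ideal (Polynomial R) := Ideal.span {f} with hIdef
  -- basic facts about `f`
  have hf0 : f ≠ 0 := by
    intro h
    have := congrArg (fun p => Polynomial.coeff p 1) h
    simp [hfdef] at this
  have hEval : Polynomial.eval π f = 0 := by simp [hfdef]
  have hmemI : f ∈ I := Ideal.subset_span rfl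
  have hItop : ∀ x : M, x ∈ I • (⊤ : Submodule (Polynomial R) M) ↔ ∃ m : M, f • m = x := by
    intro x
    rw [hIdef, Submodule.ideal_span_singleton_smul, ← SetLike.mem_coe,
      Submodule.coe_pointwise_smul, Set.mem_smul_set]
    simp
  have hINmem : ∀ x : M, x ∈ I • N ↔ ∃ n ∈ N, f • n = x := by
    intro x
    rw [hIdef, Submodule.ideal_span_singleton_smul, ← SetLike.mem_coe,
      Submodule.coe_pointwise_smul, Set.mem_smul_set]
    simp
  have hItopN : I • (⊤ : Submodule (Polynomial R) M) ≤ N := by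
    intro x hx
    obtain ⟨m, rfl⟩ := (hItop x).1 hx
    exact hcN m
  have hsmulinj : ∀ m m' : M, f • m = f • m' → m = m' := fun m m' h =>
    smul_right_injective M hf0 h
  -- Step A : a basis of `Res Q` where `Q = M ⧸ (I • ⊤)`
  let ι := Module.Free.ChooseBasisIndex (Polynomial R) M
  let b : Module.Basis ι (Polynomial R) M := Module.Free.chooseBasis (Polynomial R) M
  have hcard : Fintype.card ι = r := by
    rw [← Module.finrank_eq_card_chooseBasisIndex, hrkM]
  let eQ := RestrictScalars.addEquiv R (Polynomial R)
      (M ⧸ (I • (⊤ : Submodule (Polynomial R) M)))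
  let v : ι → RestrictScalars R (Polynomial R)
      (M ⧸ (I • (⊤ : Submodule (Polynomial R) M))) :=
    fun i => eQ.symm (Submodule.Quotient.mk (b i))
  have hsum : ∀ (s : Finset ι) (c : ι → R),
      eQ (∑ i ∈ s, c i • v i)
        = Submodule.Quotient.mk (∑ i ∈ s, Polynomial.C (c i) • b i) := by
    intro s c
    rw [map_sum]
    have hmk : (Submodule.Quotient.mk (∑ i ∈ s, Polynomial.C (c i) • b i) :
        M ⧸ (I • (⊤ : Submodule (Polynomial R) M)))
        = ∑ i ∈ s, Submodule.Quotient.mk (Polynomial.C (c i) • b i) := by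
      rw [← Submodule.mkQ_apply, map_sum]
      simp [Submodule.mkQ_apply]
    rw [hmk]
    refine Finset.sum_congr rfl fun i _ => ?_
    simp only [v, eQ, RestrictScalars.addEquiv_map_smul, AddEquiv.apply_symm_apply,
      Polynomial.algebraMap_eq, Submodule.Quotient.mk_smul]
  have li : LinearIndependent R v := by
    refine (@linearIndependent_iff' ι R _ _ _ (RestrictScalars.module R (Polynomial R)
      (M ⧸ (I • (⊤ : Submodule (Polynomial R) M)))) v).2 ?_
    intro s c hsc j hj
    have h0 : (Submodule.Quotient.mk (∑ i ∈ s, Polynomial.C (c i) • b i) :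
        M ⧸ (I • (⊤ : Submodule (Polynomial R) M))) = 0 := by
      exact (hsum s c).symm.trans ((congrArg eQ hsc).trans (map_zero eQ))
    obtain ⟨m, hm⟩ := (hItop _).1 ((Submodule.Quotient.mk_eq_zero _).1 h0)
    have hrepr : Polynomial.C (c j) = f * (b.repr m j) := by
      calc Polynomial.C (c j) = b.repr (∑ i ∈ s, Polynomial.C (c i) • b i) j := by
            rw [map_sum]
            rw [Finsupp.finset_sum_apply]
            simp only [map_smul, Module.Basis.repr_self, Finsupp.smul_apply, Finsupp.single_apply,
              smul_eq_mul, mul_ite, mul_one, mul_zero]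
            rw [Finset.sum_ite_eq' s j (fun i => Polynomial.C (c i))]
            simp [hj]
        _ = b.repr (f • m) j := by rw [hm]
        _ = f * b.repr m j := by
            rw [map_smul, Finsupp.smul_apply, smul_eq_mul]
    have := congrArg (Polynomial.eval π) hrepr
    simpa [hEval] using this
  have hspan : ⊤ ≤ Submodule.span R (Set.range v) := by
    intro x _
    obtain ⟨m, hm⟩ := Submodule.Quotient.mk_surjective _ (eQ x)
    let p : ι → Polynomial R := fun j => b.repr m j
    have hdvd : ∀ j : ι, ∃ h : Polynomial R,
        p j - Polynomial.C (Polynomial.eval π (p j)) = f * h := by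
      intro j
      have h1 : (Polynomial.X - Polynomial.C π) ∣
          (p j - Polynomial.C (Polynomial.eval π (p j))) :=
        Polynomial.X_sub_C_dvd_sub_C_eval
      have h2 : f ∣ (p j - Polynomial.C (Polynomial.eval π (p j))) := by
        have hfneg : f = -(Polynomial.X - Polynomial.C π) := by rw [hfdef]; ring
        rw [hfneg, neg_dvd]
        exact h1
      obtain ⟨h, hh⟩ := h2
      exact ⟨h, hh⟩
    choose h hh using hdvd
    have key : x = ∑ j, (Polynomial.eval π (p j)) • v j := by
      apply eQ.injective
      rw [hsum Finset.univ _]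
      rw [← hm]
      rw [Submodule.Quotient.eq]
      have hm' : m = ∑ j, p j • b j := (b.sum_repr m).symm
      have : m - ∑ j, Polynomial.C (Polynomial.eval π (p j)) • b j
          = f • (∑ j, h j • b j) := by
        conv_lhs => rw [hm']
        rw [Finset.smul_sum, ← Finset.sum_sub_distrib]
        refine Finset.sum_congr rfl fun j _ => ?_
        rw [← sub_smul, hh j, mul_smul]
      rw [this]
      exact (hItop _).2 ⟨_, rfl⟩
    rw [key]
    exact Submodule.sum_mem _ fun j _ =>
      Submodule.smul_mem _ _ (Submodule.subset_span ⟨j, rfl⟩)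
  let qB : Module.Basis ι R (RestrictScalars R (Polynomial R)
      (M ⧸ (I • (⊤ : Submodule (Polynomial R) M)))) := Module.Basis.mk li hspan
  haveI hQfin : Module.Finite R (RestrictScalars R (Polynomial R)
      (M ⧸ (I • (⊤ : Submodule (Polynomial R) M)))) := Module.Finite.of_basis qB
  haveI hQfree : Module.Free R (RestrictScalars R (Polynomial R)
      (M ⧸ (I • (⊤ : Submodule (Polynomial R) M)))) := Module.Free.of_basis qB
  have hQrank : Module.finrank R (RestrictScalars R (Polynomial R)
      (M ⧸ (I • (⊤ : Submodule (Polynomial R) M)))) = r := by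
    rw [Module.finrank_eq_card_basis qB, hcard]
  -- Step B : `K = N ⧸ comap N.subtype (I • ⊤)`
  set J2 : Submodule (Polynomial R) N :=
    Submodule.comap N.subtype (I • (⊤ : Submodule (Polynomial R) M)) with hJ2def
  let φ : N →ₗ[Polynomial R] (M ⧸ (I • (⊤ : Submodule (Polynomial R) M))) :=
    (I • (⊤ : Submodule (Polynomial R) M)).mkQ ∘ₗ N.subtype
  have hkφ : LinearMap.ker φ = J2 := by
    rw [LinearMap.ker_comp, Submodule.ker_mkQ]
  let i2 : (N ⧸ J2) →ₗ[Polynomial R] (M ⧸ (I • (⊤ : Submodule (Polynomial R) M))) :=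
    J2.liftQ φ hkφ.ge
  have hi2 : Function.Injective i2 := by
    rw [← LinearMap.ker_eq_bot]
    exact Submodule.ker_liftQ_eq_bot _ _ _ hkφ.le
  let g2 : (M ⧸ (I • (⊤ : Submodule (Polynomial R) M))) →ₗ[Polynomial R] (M ⧸ N) :=
    Submodule.mapQ _ N LinearMap.id (fun x hx => hItopN hx)
  have hg2 : Function.Surjective g2 := by
    intro c
    obtain ⟨m, rfl⟩ := Submodule.Quotient.mk_surjective N c
    exact ⟨Submodule.Quotient.mk m, by simp [g2, Submodule.mapQ_apply]⟩
  have hex2 : LinearMap.range i2 = LinearMap.ker g2 := by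
    rw [Submodule.range_liftQ]
    ext x
    constructor
    · rintro ⟨⟨n, hn⟩, rfl⟩
      simp only [LinearMap.mem_ker, φ, LinearMap.comp_apply, Submodule.subtype_apply,
        Submodule.mkQ_apply, g2, Submodule.mapQ_apply, LinearMap.id_apply]
      exact (Submodule.Quotient.mk_eq_zero N).2 hn
    · intro hx
      obtain ⟨m, rfl⟩ := Submodule.Quotient.mk_surjective _ x
      have hmN : m ∈ N := by
        simpa [g2, Submodule.mapQ_apply, Submodule.Quotient.mk_eq_zero] using hx
      exact ⟨⟨m, hmN⟩, rfl⟩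
  obtain ⟨e2⟩ : Nonempty ((RestrictScalars R (Polynomial R)
      (M ⧸ (I • (⊤ : Submodule (Polynomial R) M)))) ≃ₗ[R]
      (RestrictScalars R (Polynomial R) (N ⧸ J2)) ×
      (RestrictScalars R (Polynomial R) (M ⧸ N))) :=
    split_nonempty (resMap R (Polynomial R) i2) (resMap R (Polynomial R) g2)
    (resMap_injective R (Polynomial R) hi2) (resMap_surjective R (Polynomial R) hg2)
    (resMap_range_ker R (Polynomial R) hex2)
  haveI hKfin : Module.Finite R (RestrictScalars R (Polynomial R) (N ⧸ J2)) := by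
    refine Module.Finite.of_surjective
      ((LinearMap.fst R (RestrictScalars R (Polynomial R) (N ⧸ J2))
        (RestrictScalars R (Polynomial R) (M ⧸ N))) ∘ₗ e2.toLinearMap) ?_
    intro y
    exact ⟨e2.symm (y, 0), by simp⟩
  haveI hKnzd : Module.IsTorsionFree R (RestrictScalars R (Polynomial R) (N ⧸ J2)) := by
    refine Function.Injective.moduleIsTorsionFree
      (e2.symm.toLinearMap ∘ₗ LinearMap.inl R (RestrictScalars R (Polynomial R) (N ⧸ J2))
        (RestrictScalars R (Polynomial R) (M ⧸ N))) ?_ (fun c x => map_smul _ c x)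
    exact e2.symm.injective.comp LinearMap.inl_injective
  haveI hKfree : Module.Free R (RestrictScalars R (Polynomial R) (N ⧸ J2)) :=
    @Module.free_of_finite_type_torsion_free' R _ _ _ (RestrictScalars.module R (Polynomial R) (N ⧸ J2)) _ _ hKfin hKnzd
  have hKrank : Module.finrank R (RestrictScalars R (Polynomial R) (N ⧸ J2)) = r - d := by
    have h1 := e2.finrank_eq
    rw [Module.finrank_prod, hQrank, hLie] at h1
    omega
  -- Step C : `N ⧸ comap N.subtype (I • N)`
  set J1 : Submodule (Polynomial R) N := Submodule.comap N.subtype (I • N) with hJ1def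
  have hJ12 : J1 ≤ J2 := fun x hx =>
    Submodule.smul_mono le_rfl le_top hx
  let g1 : (N ⧸ J1) →ₗ[Polynomial R] (N ⧸ J2) := Submodule.mapQ J1 J2 LinearMap.id hJ12
  have hg1 : Function.Surjective g1 := by
    intro c
    obtain ⟨n, rfl⟩ := Submodule.Quotient.mk_surjective J2 c
    exact ⟨Submodule.Quotient.mk n, by simp [g1, Submodule.mapQ_apply]⟩
  let θ : M →ₗ[Polynomial R] N :=
    LinearMap.codRestrict N (f • LinearMap.id) (fun m => by simpa using hcN m)
  have hθ : ∀ m : M, (θ m : M) = f • m := fun m => rfl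
  let ψ : M →ₗ[Polynomial R] (N ⧸ J1) := J1.mkQ ∘ₗ θ
  have hNψ : N ≤ LinearMap.ker ψ := by
    intro n hn
    simp only [ψ, LinearMap.mem_ker, LinearMap.comp_apply, Submodule.mkQ_apply,
      Submodule.Quotient.mk_eq_zero]
    show θ n ∈ J1
    rw [hJ1def, Submodule.mem_comap]
    rw [Submodule.subtype_apply, hθ]
    exact Submodule.smul_mem_smul hmemI hn
  have hψN : LinearMap.ker ψ ≤ N := by
    intro m hm
    have : θ m ∈ J1 := by
      simpa [ψ, Submodule.Quotient.mk_eq_zero] using hm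
    rw [hJ1def, Submodule.mem_comap, Submodule.subtype_apply, hθ] at this
    obtain ⟨n, hn, hfn⟩ := (hINmem _).1 this
    have := hsmulinj _ _ hfn
    rwa [← this]
  let i1 : (M ⧸ N) →ₗ[Polynomial R] (N ⧸ J1) := N.liftQ ψ hNψ
  have hi1 : Function.Injective i1 := by
    rw [← LinearMap.ker_eq_bot]
    exact Submodule.ker_liftQ_eq_bot _ _ _ hψN
  have hex1 : LinearMap.range i1 = LinearMap.ker g1 := by
    rw [Submodule.range_liftQ]
    ext x
    constructor
    · rintro ⟨m, rfl⟩
      simp only [LinearMap.mem_ker, ψ, LinearMap.comp_apply, Submodule.mkQ_apply,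
        g1, Submodule.mapQ_apply, LinearMap.id_apply, Submodule.Quotient.mk_eq_zero]
      show θ m ∈ J2
      rw [hJ2def, Submodule.mem_comap, Submodule.subtype_apply, hθ]
      exact (hItop _).2 ⟨m, rfl⟩
    · intro hx
      obtain ⟨n, rfl⟩ := Submodule.Quotient.mk_surjective J1 x
      have hn2 : (n : M) ∈ I • (⊤ : Submodule (Polynomial R) M) := by
        have : n ∈ J2 := by
          simpa [g1, Submodule.mapQ_apply, Submodule.Quotient.mk_eq_zero] using hx
        rwa [hJ2def, Submodule.mem_comap, Submodule.subtype_apply] at this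
      obtain ⟨m, hfm⟩ := (hItop _).1 hn2
      refine ⟨m, ?_⟩
      have hθm : θ m = n := Subtype.ext (by rw [hθ]; exact hfm)
      simp [ψ, hθm]
  obtain ⟨e1⟩ : Nonempty ((RestrictScalars R (Polynomial R) (N ⧸ J1)) ≃ₗ[R]
      (RestrictScalars R (Polynomial R) (M ⧸ N)) ×
      (RestrictScalars R (Polynomial R) (N ⧸ J2))) :=
    split_nonempty (resMap R (Polynomial R) i1) (resMap R (Polynomial R) g1)
    (resMap_injective R (Polynomial R) hi1) (resMap_surjective R (Polynomial R) hg1)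
    (resMap_range_ker R (Polynomial R) hex1)
  haveI hB1fin : Module.Finite R (RestrictScalars R (Polynomial R) (N ⧸ J1)) :=
    Module.Finite.equiv e1.symm
  haveI hB1free : Module.Free R (RestrictScalars R (Polynomial R) (N ⧸ J1)) :=
    Module.Free.of_equiv e1.symm
  have hB1rank : Module.finrank R (RestrictScalars R (Polynomial R) (N ⧸ J1)) = r := by
    have h1 := e1.finrank_eq
    rw [Module.finrank_prod, hLie, hKrank] at h1
    omega
  exact ⟨⟨hB1fin, hB1free, hB1rank⟩, hKfin, hKfree, hKrank⟩
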